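/- Let σ be a nonempty finite CNN request sequence whose last request is r = r(x,y), let W = W_σ be its work function, and fix λ ∈ (0,1) and α with 0 < α < (1−λ)/(2(1+λ)). If F_W (respectively G_W) attains its infimum over M³ at (s_1,s_2,s_3), then s_1, s_2, s_3 ∈ r. -/

import Mathlib

noncomputable section

/-- The L1 metric on `ℝ²` (the CNN metric space). -/
def dL1 (p q : ℝ × ℝ) : ℝ := |p.1 - q.1| + |p.2 - q.2|

/-- The CNN request associated with a point `(x, y)`. -/
def req (p : ℝ × ℝ) : Set (ℝ × ℝ) := {q | q.1 = p.1 ∨ q.2 = p.2}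

/-- The work function of a finite CNN request sequence (requests listed in order of arrival),
starting at origin `O`. -/
noncomputable def WF (O : ℝ × ℝ) : List (ℝ × ℝ) → (ℝ × ℝ) → ℝ
  | [], s => dL1 O s
  | p :: l, s => sInf ((fun t => dL1 O t + WF t l s) '' req p)

/-- The slack of a point `s` to a nonempty set `C` with respect to `W`. -/
noncomputable def Sl (lam : ℝ) (W : ℝ × ℝ → ℝ) (s : ℝ × ℝ) (C : Set (ℝ × ℝ)) : ℝ :=
  sInf ((fun t => W t + lam * dL1 t s) '' C) - W s

/-- The rectangle spanned by two points of `ℝ²`. -/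
def Boks (s1 s2 : ℝ × ℝ) : Set (ℝ × ℝ) :=
  {p | p.1 ∈ Set.uIcc s1.1 s2.1 ∧ p.2 ∈ Set.uIcc s1.2 s2.2}

/-- `H_W(s₁,s₂) = (1/2)W(s₁) + (1/2)W(s₂) − (λ/2)d(s₁,s₂)`. -/
noncomputable def Hf (lam : ℝ) (W : ℝ × ℝ → ℝ) (s1 s2 : ℝ × ℝ) : ℝ :=
  (1 / 2) * W s1 + (1 / 2) * W s2 - (lam / 2) * dL1 s1 s2

/-- `F_W(s₁,s₂,s₃) = H_W(s₁,s₂) − α·Sl_W(s₃;{s₁,s₂})`. -/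
noncomputable def Ff (lam α : ℝ) (W : ℝ × ℝ → ℝ) (s1 s2 s3 : ℝ × ℝ) : ℝ :=
  Hf lam W s1 s2 - α * Sl lam W s3 {s1, s2}

/-- `G_W(s₁,s₂,s₃) = H_W(s₁,s₂) − α·Sl_W(s₃;Boks(s₁,s₂))`. -/
noncomputable def Gf (lam α : ℝ) (W : ℝ × ℝ → ℝ) (s1 s2 s3 : ℝ × ℝ) : ℝ :=
  Hf lam W s1 s2 - α * Sl lam W s3 (Boks s1 s2)


section CNNAux

lemma dL1_nonneg (a b : ℝ × ℝ) : 0 ≤ dL1 a b := by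
  unfold dL1; positivity

lemma dL1_self (a : ℝ × ℝ) : dL1 a a = 0 := by simp [dL1]

lemma dL1_comm (a b : ℝ × ℝ) : dL1 a b = dL1 b a := by
  unfold dL1; rw [abs_sub_comm, abs_sub_comm a.2]

lemma dL1_triangle (a b c : ℝ × ℝ) : dL1 a c ≤ dL1 a b + dL1 b c := by
  unfold dL1
  have h1 := abs_sub_le a.1 b.1 c.1
  have h2 := abs_sub_le a.2 b.2 c.2
  linarith

lemma dL1_eq_zero {a b : ℝ × ℝ} (h : dL1 a b = 0) : a = b := by
  unfold dL1 at h
  have h1 : |a.1 - b.1| = 0 := le_antisymm (by have := abs_nonneg (a.2 - b.2); linarith) (abs_nonneg _)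
  have h2 : |a.2 - b.2| = 0 := by linarith [abs_nonneg (a.1 - b.1)]
  have : a.1 = b.1 := by have := abs_eq_zero.1 h1; linarith
  have : a.2 = b.2 := by have := abs_eq_zero.1 h2; linarith
  exact Prod.ext ‹a.1 = b.1› ‹a.2 = b.2›

lemma req_self (p : ℝ × ℝ) : p ∈ req p := Or.inl rfl

lemma req_nonempty (p : ℝ × ℝ) : (req p).Nonempty := ⟨p, req_self p⟩

lemma WF_nonneg (l : List (ℝ × ℝ)) : ∀ O s, 0 ≤ WF O l s := by
  induction l with
  | nil => intro O s; exact dL1_nonneg O s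
  | cons q l ih =>
    intro O s
    apply Real.sInf_nonneg
    rintro x ⟨t, _, rfl⟩
    exact add_nonneg (dL1_nonneg _ _) (ih t s)

lemma WF_bdd (l : List (ℝ × ℝ)) (O s : ℝ × ℝ) (A : Set (ℝ × ℝ)) :
    BddBelow ((fun t => dL1 O t + WF t l s) '' A) := by
  refine ⟨0, ?_⟩
  rintro x ⟨t, _, rfl⟩
  exact add_nonneg (dL1_nonneg _ _) (WF_nonneg l t s)

lemma WF_lip (l : List (ℝ × ℝ)) : ∀ O s s', WF O l s ≤ WF O l s' + dL1 s' s := by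
  induction l with
  | nil => intro O s s'; exact dL1_triangle O s' s
  | cons q l ih =>
    intro O s s'
    simp only [WF]
    rw [← sub_le_iff_le_add]
    apply le_csInf (((req_nonempty q).image _))
    rintro x ⟨t, ht, rfl⟩
    rw [sub_le_iff_le_add]
    dsimp only
    have h1 : sInf ((fun t => dL1 O t + WF t l s) '' req q) ≤ dL1 O t + WF t l s :=
      csInf_le (WF_bdd l O s _) ⟨t, ht, rfl⟩
    have := ih t s s'
    linarith

lemma WF_mem_le (p : ℝ × ℝ) (l : List (ℝ × ℝ)) :
    ∀ O t, t ∈ req p → WF O (l ++ [p]) t ≤ WF O l t := by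
  induction l with
  | nil =>
    intro O t ht
    simp only [List.nil_append, WF]
    have : sInf ((fun u => dL1 O u + WF u [] t) '' req p) ≤ dL1 O t + WF t [] t :=
      csInf_le (WF_bdd [] O t _) ⟨t, ht, rfl⟩
    simp only [WF, dL1_self] at this ⊢
    linarith
  | cons q l ih =>
    intro O t ht
    simp only [List.cons_append, WF, List.append_eq]
    apply le_csInf ((req_nonempty q).image _)
    rintro x ⟨u, hu, rfl⟩
    have h1 : sInf ((fun u => dL1 O u + WF u (l ++ [p]) t) '' req q) ≤ dL1 O u + WF u (l ++ [p]) t :=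
      csInf_le (WF_bdd (l ++ [p]) O t _) ⟨u, hu, rfl⟩
    have h2 := ih u t ht
    dsimp only
    linarith

lemma WF_bdd2 (W : (ℝ × ℝ) → ℝ) (hW : ∀ t, 0 ≤ W t) (s : ℝ × ℝ) (A : Set (ℝ × ℝ)) :
    BddBelow ((fun t => W t + dL1 t s) '' A) := by
  refine ⟨0, ?_⟩
  rintro x ⟨t, _, rfl⟩
  exact add_nonneg (hW t) (dL1_nonneg t s)

lemma WF_lb (p : ℝ × ℝ) (l : List (ℝ × ℝ)) :
    ∀ O s, sInf ((fun t => WF O l t + dL1 t s) '' req p) ≤ WF O (l ++ [p]) s := by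
  induction l with
  | nil =>
    intro O s
    simp only [List.nil_append, WF]
    exact le_rfl
  | cons q l ih =>
    intro O s
    simp only [List.cons_append, WF]
    apply le_csInf ((req_nonempty q).image _)
    rintro x ⟨u, hu, rfl⟩
    dsimp only
    have h2 := ih u s
    rw [← sub_le_iff_le_add']
    calc sInf ((fun t => WF O (q :: l) t + dL1 t s) '' req p) - dL1 O u
        ≤ sInf ((fun t => WF u l t + dL1 t s) '' req p) := by
          apply le_csInf ((req_nonempty p).image _)
          rintro y ⟨t, ht, rfl⟩
          dsimp only
          rw [sub_le_iff_le_add]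
          have h3 : sInf ((fun t => WF O (q :: l) t + dL1 t s) '' req p) ≤ WF O (q :: l) t + dL1 t s :=
            csInf_le (WF_bdd2 _ (fun t => WF_nonneg _ O t) s _) ⟨t, ht, rfl⟩
          have h4 : WF O (q :: l) t ≤ dL1 O u + WF u l t := by
            simp only [WF]
            exact csInf_le (WF_bdd l O t _) ⟨u, hu, rfl⟩
          linarith
      _ ≤ WF u (l ++ [p]) s := h2

lemma dist_le_dL1 (a b : ℝ × ℝ) : dist a b ≤ dL1 a b := by
  rw [Prod.dist_eq]
  unfold dL1
  rw [Real.dist_eq, Real.dist_eq]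
  have := abs_nonneg (a.1 - b.1); have := abs_nonneg (a.2 - b.2)
  apply max_le <;> linarith

lemma dL1_le_dist (a b : ℝ × ℝ) : dL1 a b ≤ 2 * dist a b := by
  rw [Prod.dist_eq]
  unfold dL1
  rw [Real.dist_eq, Real.dist_eq]
  have h1 : |a.1 - b.1| ≤ max |a.1 - b.1| |a.2 - b.2| := le_max_left _ _
  have h2 : |a.2 - b.2| ≤ max |a.1 - b.1| |a.2 - b.2| := le_max_right _ _
  linarith

lemma req_closed (p : ℝ × ℝ) : IsClosed (req p) := by
  have : req p = {q : ℝ × ℝ | q.1 = p.1} ∪ {q : ℝ × ℝ | q.2 = p.2} := rfl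
  rw [this]
  exact (isClosed_eq continuous_fst continuous_const).union
    (isClosed_eq continuous_snd continuous_const)

lemma WF_cont (l : List (ℝ × ℝ)) (O : ℝ × ℝ) : Continuous (fun t => WF O l t) := by
  apply (LipschitzWith.of_dist_le_mul (K := 2) ?_).continuous
  intro a b
  rw [Real.dist_eq, abs_le]
  have h1 := WF_lip l O a b
  have h2 := WF_lip l O b a
  have h3 := dL1_le_dist a b
  have h4 := dL1_le_dist b a
  rw [dist_comm b a] at h4
  push_cast
  constructor <;> linarith

lemma dL1_cont (s : ℝ × ℝ) : Continuous (fun t => dL1 t s) := by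
  unfold dL1
  fun_prop

lemma WF_anchor (p : ℝ × ℝ) (l : List (ℝ × ℝ)) (O s : ℝ × ℝ) :
    ∃ t ∈ req p, WF O (l ++ [p]) t + dL1 t s ≤ WF O (l ++ [p]) s := by
  set V : (ℝ × ℝ) → ℝ := fun t => WF O l t with hV
  set g : (ℝ × ℝ) → ℝ := fun t => V t + dL1 t s with hg
  have hgc : Continuous g := (WF_cont l O).add (dL1_cont s)
  set w : ℝ × ℝ := (p.1, s.2) with hw
  have hwreq : w ∈ req p := Or.inl rfl
  set R : ℝ := g w with hR
  set K : Set (ℝ × ℝ) := req p ∩ Metric.closedBall s R with hK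
  have hKc : IsCompact K := (isCompact_closedBall s R).inter_left (req_closed p)
  have hwK : w ∈ K := by
    refine ⟨hwreq, ?_⟩
    rw [Metric.mem_closedBall]
    have h1 := dist_le_dL1 w s
    have h2 := WF_nonneg l O w
    simp only [hR, hg]
    linarith
  obtain ⟨t0, ht0K, hmin⟩ := hKc.exists_isMinOn ⟨w, hwK⟩ hgc.continuousOn
  have hmin' : ∀ t ∈ req p, g t0 ≤ g t := by
    intro t ht
    by_cases hball : dist t s ≤ R
    · exact hmin ⟨ht, Metric.mem_closedBall.2 hball⟩
    · push_neg at hball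
      have h1 : g t0 ≤ g w := hmin hwK
      have h2 : dist t s ≤ dL1 t s := dist_le_dL1 t s
      have h3 : 0 ≤ V t := WF_nonneg l O t
      have : R < g t := by simp only [hg]; linarith
      linarith
  have hsinf : g t0 ≤ sInf ((fun t => V t + dL1 t s) '' req p) := by
    apply le_csInf ((req_nonempty p).image _)
    rintro x ⟨t, ht, rfl⟩
    exact hmin' t ht
  have hlb := WF_lb p l O s
  have hmem := WF_mem_le p l O t0 ht0K.1
  exact ⟨t0, ht0K.1, by simp only [hg, hV] at hsinf ⊢; linarith⟩

lemma clamp1 (a b c x : ℝ) (hx : x ∈ Set.uIcc c b) : ∃ y ∈ Set.uIcc a b, |x - y| ≤ |c - a| := by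
  by_cases h : x ∈ Set.uIcc a b
  · exact ⟨x, h, by simp [abs_nonneg]⟩
  · refine ⟨a, Set.left_mem_uIcc, ?_⟩
    rw [Set.mem_uIcc] at hx h
    push_neg at h
    obtain ⟨h3, h4⟩ := h
    rcases abs_cases (x - a) with ⟨e1, _⟩ | ⟨e1, _⟩ <;>
      rcases abs_cases (c - a) with ⟨e2, _⟩ | ⟨e2, _⟩ <;>
      rcases hx with ⟨h1, h2⟩ | ⟨h1, h2⟩ <;>
      rcases le_total a b with h5 | h5 <;>
      [skip; skip; skip; skip; skip; skip; skip; skip; skip; skip; skip; skip; skip; skip; skip; skip] <;>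
      first
      | linarith
      | (exfalso; first | linarith [h3 (by linarith)] | linarith [h4 (by linarith)])

section Moves
variable (lam α : ℝ) (h0 : 0 < lam) (h1 : lam < 1)
    (hα0 : 0 < α) (hα1 : α < (1 - lam) / (2 * (1 + lam)))
    (p : ℝ × ℝ) (W : ℝ × ℝ → ℝ)
    (hNN : ∀ s, 0 ≤ W s)
    (hLip : ∀ s s', W s ≤ W s' + dL1 s' s)
    (hAnchor : ∀ s, ∃ t ∈ req p, W t + dL1 t s ≤ W s)

lemma hc_pos (h0 : 0 < lam) (h1 : lam < 1) (hα1 : α < (1 - lam) / (2 * (1 + lam))) : 0 < (1 - lam) / 2 - α * (1 + lam) := by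
  have h2 : (0:ℝ) < 2 * (1 + lam) := by linarith
  have := (lt_div_iff₀ h2).1 hα1
  nlinarith

lemma Sl_pair (s a b : ℝ × ℝ) :
    Sl lam W s {a, b} = min (W a + lam * dL1 a s) (W b + lam * dL1 b s) - W s := by
  unfold Sl
  rw [Set.image_pair, csInf_pair]

include h0 h1 hα0 hα1 hNN hLip hAnchor in
lemma F_first (s1 s2 s3 : ℝ × ℝ)
    (hm : ∀ t1 t2 t3 : ℝ × ℝ, Ff lam α W s1 s2 s3 ≤ Ff lam α W t1 t2 t3) :
    s1 ∈ req p := by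
  obtain ⟨t1, ht1, hanch⟩ := hAnchor s1
  set D := dL1 t1 s1 with hD
  have hD0 : 0 ≤ D := dL1_nonneg _ _
  have hWt1 : W t1 = W s1 - D := by have := hLip s1 t1; have := dL1_comm s1 t1; linarith
  have hc := hc_pos lam α h0 h1 hα1
  have hm1 := hm t1 s2 s3
  rw [Ff, Ff, Hf, Hf, Sl_pair, Sl_pair] at hm1
  have e1 : dL1 s1 s2 - D ≤ dL1 t1 s2 := by
    have := dL1_triangle s1 t1 s2; have := dL1_comm s1 t1; linarith
  have e2 : dL1 s1 s3 - D ≤ dL1 t1 s3 := by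
    have := dL1_triangle s1 t1 s3; have := dL1_comm s1 t1; linarith
  have hminb : min (W s1 + lam * dL1 s1 s3) (W s2 + lam * dL1 s2 s3) - (1 + lam) * D ≤
      min (W t1 + lam * dL1 t1 s3) (W s2 + lam * dL1 s2 s3) := by
    apply le_min
    · have h5 : min (W s1 + lam * dL1 s1 s3) (W s2 + lam * dL1 s2 s3) ≤
          W s1 + lam * dL1 s1 s3 := min_le_left _ _
      have h6 : lam * (dL1 s1 s3 - D) ≤ lam * dL1 t1 s3 :=
        mul_le_mul_of_nonneg_left e2 h0.le
      nlinarith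
    · have h5 : min (W s1 + lam * dL1 s1 s3) (W s2 + lam * dL1 s2 s3) ≤
          W s2 + lam * dL1 s2 s3 := min_le_right _ _
      nlinarith
  have m1 : α * (min (W s1 + lam * dL1 s1 s3) (W s2 + lam * dL1 s2 s3) - (1 + lam) * D) ≤
      α * min (W t1 + lam * dL1 t1 s3) (W s2 + lam * dL1 s2 s3) :=
    mul_le_mul_of_nonneg_left hminb hα0.le
  have m2 : lam * (dL1 s1 s2 - D) ≤ lam * dL1 t1 s2 := mul_le_mul_of_nonneg_left e1 h0.le
  have hD0' : D ≤ 0 := by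
    by_contra h
    push_neg at h
    nlinarith [mul_pos hc h]
  have : D = 0 := le_antisymm hD0' hD0
  have := dL1_eq_zero this
  rwa [← this]

include h0 h1 hα0 hα1 hNN hLip hAnchor in
lemma F_third (s1 s2 s3 : ℝ × ℝ)
    (hm : ∀ t1 t2 t3 : ℝ × ℝ, Ff lam α W s1 s2 s3 ≤ Ff lam α W t1 t2 t3) :
    s3 ∈ req p := by
  obtain ⟨t3, ht3, hanch⟩ := hAnchor s3
  set D := dL1 t3 s3 with hD
  have hD0 : 0 ≤ D := dL1_nonneg _ _
  have hWt3 : W t3 = W s3 - D := by have := hLip s3 t3; have := dL1_comm s3 t3; linarith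
  have hm1 := hm s1 s2 t3
  rw [Ff, Ff, Hf, Sl_pair, Sl_pair] at hm1
  have e1 : dL1 s1 s3 - D ≤ dL1 s1 t3 := by
    have := dL1_triangle s1 t3 s3; linarith
  have e2 : dL1 s2 s3 - D ≤ dL1 s2 t3 := by
    have := dL1_triangle s2 t3 s3; linarith
  have hminb : min (W s1 + lam * dL1 s1 s3) (W s2 + lam * dL1 s2 s3) - lam * D ≤
      min (W s1 + lam * dL1 s1 t3) (W s2 + lam * dL1 s2 t3) := by
    apply le_min
    · have h5 : min (W s1 + lam * dL1 s1 s3) (W s2 + lam * dL1 s2 s3) ≤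
          W s1 + lam * dL1 s1 s3 := min_le_left _ _
      have h6 : lam * (dL1 s1 s3 - D) ≤ lam * dL1 s1 t3 :=
        mul_le_mul_of_nonneg_left e1 h0.le
      nlinarith
    · have h5 : min (W s1 + lam * dL1 s1 s3) (W s2 + lam * dL1 s2 s3) ≤
          W s2 + lam * dL1 s2 s3 := min_le_right _ _
      have h6 : lam * (dL1 s2 s3 - D) ≤ lam * dL1 s2 t3 :=
        mul_le_mul_of_nonneg_left e2 h0.le
      nlinarith
  have m1 : α * (min (W s1 + lam * dL1 s1 s3) (W s2 + lam * dL1 s2 s3) - lam * D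
        - (W s3 - D)) ≤
      α * (min (W s1 + lam * dL1 s1 t3) (W s2 + lam * dL1 s2 t3) - W t3) := by
    apply mul_le_mul_of_nonneg_left _ hα0.le
    rw [hWt3]; linarith
  have hD0' : D ≤ 0 := by
    by_contra h
    push_neg at h
    nlinarith [mul_pos (mul_pos hα0 (show (0:ℝ) < 1 - lam by linarith)) h]
  have : D = 0 := le_antisymm hD0' hD0
  have := dL1_eq_zero this
  rwa [← this]

lemma Boks_nonempty (a b : ℝ × ℝ) : (Boks a b).Nonempty :=
  ⟨a, Set.left_mem_uIcc, Set.left_mem_uIcc⟩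

lemma Sl_bdd (h0 : 0 < lam) (hNN : ∀ s, 0 ≤ W s) (s : ℝ × ℝ) (C : Set (ℝ × ℝ)) :
    BddBelow ((fun t => W t + lam * dL1 t s) '' C) := by
  refine ⟨0, ?_⟩
  rintro x ⟨t, _, rfl⟩
  have := dL1_nonneg t s
  have := hNN t
  positivity

include h0 h1 hα0 hα1 hNN hLip hAnchor in
lemma G_first (s1 s2 s3 : ℝ × ℝ)
    (hm : ∀ t1 t2 t3 : ℝ × ℝ, Gf lam α W s1 s2 s3 ≤ Gf lam α W t1 t2 t3) :
    s1 ∈ req p := by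
  obtain ⟨t1, ht1, hanch⟩ := hAnchor s1
  set D := dL1 t1 s1 with hD
  have hD0 : 0 ≤ D := dL1_nonneg _ _
  have hWt1 : W t1 = W s1 - D := by have := hLip s1 t1; have := dL1_comm s1 t1; linarith
  have hc := hc_pos lam α h0 h1 hα1
  have hm1 := hm t1 s2 s3
  rw [Gf, Gf, Hf, Hf, Sl, Sl] at hm1
  have e1 : dL1 s1 s2 - D ≤ dL1 t1 s2 := by
    have := dL1_triangle s1 t1 s2; have := dL1_comm s1 t1; linarith
  set Iold := sInf ((fun t => W t + lam * dL1 t s3) '' Boks s1 s2) with hIold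
  set Inew := sInf ((fun t => W t + lam * dL1 t s3) '' Boks t1 s2) with hInew
  have hIb : Iold - (1 + lam) * D ≤ Inew := by
    apply le_csInf ((Boks_nonempty t1 s2).image _)
    rintro x ⟨q, hq, rfl⟩
    obtain ⟨y1, hy1, hb1⟩ := clamp1 s1.1 s2.1 t1.1 q.1 hq.1
    obtain ⟨y2, hy2, hb2⟩ := clamp1 s1.2 s2.2 t1.2 q.2 hq.2
    have hq' : ((y1, y2) : ℝ × ℝ) ∈ Boks s1 s2 := ⟨hy1, hy2⟩
    have hdqq' : dL1 q (y1, y2) ≤ D := by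
      simp only [hD, dL1]
      linarith
    have h5 : Iold ≤ W (y1, y2) + lam * dL1 (y1, y2) s3 :=
      csInf_le (Sl_bdd lam W h0 hNN s3 _) ⟨(y1, y2), hq', rfl⟩
    have h6 : W (y1, y2) ≤ W q + dL1 q (y1, y2) := hLip (y1, y2) q
    have h7 : dL1 (y1, y2) s3 ≤ dL1 (y1, y2) q + dL1 q s3 := dL1_triangle _ _ _
    have h8 : dL1 (y1, y2) q = dL1 q (y1, y2) := dL1_comm _ _
    have h9 : lam * dL1 (y1, y2) s3 ≤ lam * (dL1 q (y1, y2) + dL1 q s3) :=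
      mul_le_mul_of_nonneg_left (by linarith) h0.le
    have h10 : lam * dL1 q (y1, y2) ≤ lam * D := mul_le_mul_of_nonneg_left hdqq' h0.le
    dsimp only
    linarith
  have m1 : α * (Iold - (1 + lam) * D - W s3) ≤ α * (Inew - W s3) := by
    apply mul_le_mul_of_nonneg_left _ hα0.le
    linarith
  have m2 : lam * (dL1 s1 s2 - D) ≤ lam * dL1 t1 s2 := mul_le_mul_of_nonneg_left e1 h0.le
  have hD0' : D ≤ 0 := by
    by_contra h
    push_neg at h
    nlinarith [mul_pos hc h]
  have : D = 0 := le_antisymm hD0' hD0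
  have := dL1_eq_zero this
  rwa [← this]

include h0 h1 hα0 hα1 hNN hLip hAnchor in
lemma G_third (s1 s2 s3 : ℝ × ℝ)
    (hm : ∀ t1 t2 t3 : ℝ × ℝ, Gf lam α W s1 s2 s3 ≤ Gf lam α W t1 t2 t3) :
    s3 ∈ req p := by
  obtain ⟨t3, ht3, hanch⟩ := hAnchor s3
  set D := dL1 t3 s3 with hD
  have hD0 : 0 ≤ D := dL1_nonneg _ _
  have hWt3 : W t3 = W s3 - D := by have := hLip s3 t3; have := dL1_comm s3 t3; linarith
  have hm1 := hm s1 s2 t3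
  rw [Gf, Gf, Hf, Sl, Sl] at hm1
  set Iold := sInf ((fun t => W t + lam * dL1 t s3) '' Boks s1 s2) with hIold
  set Inew := sInf ((fun t => W t + lam * dL1 t t3) '' Boks s1 s2) with hInew
  have hIb : Iold - lam * D ≤ Inew := by
    apply le_csInf ((Boks_nonempty s1 s2).image _)
    rintro x ⟨q, hq, rfl⟩
    have h5 : Iold ≤ W q + lam * dL1 q s3 := csInf_le (Sl_bdd lam W h0 hNN s3 _) ⟨q, hq, rfl⟩
    have h7 : dL1 q s3 ≤ dL1 q t3 + dL1 t3 s3 := dL1_triangle _ _ _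
    have h9 : lam * (dL1 q s3 - D) ≤ lam * dL1 q t3 :=
      mul_le_mul_of_nonneg_left (by linarith) h0.le
    dsimp only
    linarith
  have m1 : α * (Iold - lam * D - (W s3 - D)) ≤ α * (Inew - W t3) := by
    apply mul_le_mul_of_nonneg_left _ hα0.le
    rw [hWt3]; linarith
  have hD0' : D ≤ 0 := by
    by_contra h
    push_neg at h
    nlinarith [mul_pos (mul_pos hα0 (show (0:ℝ) < 1 - lam by linarith)) h]
  have : D = 0 := le_antisymm hD0' hD0
  have := dL1_eq_zero this
  rwa [← this]
end Moves

lemma Ff_swap (lam α : ℝ) (W : ℝ × ℝ → ℝ) (a b c : ℝ × ℝ) :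
    Ff lam α W a b c = Ff lam α W b a c := by
  simp only [Ff, Hf, Sl]
  rw [dL1_comm a b, Set.pair_comm]
  ring

lemma Boks_comm (a b : ℝ × ℝ) : Boks a b = Boks b a := by
  ext q
  simp only [Boks, Set.mem_setOf_eq, Set.uIcc_comm a.1 b.1, Set.uIcc_comm a.2 b.2]

lemma Gf_swap (lam α : ℝ) (W : ℝ × ℝ → ℝ) (a b c : ℝ × ℝ) :
    Gf lam α W a b c = Gf lam α W b a c := by
  simp only [Gf, Hf, Sl]
  rw [dL1_comm a b, Boks_comm]
  ring


end CNNAux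

/-- If `F_W` (resp. `G_W`) attains its infimum over `M³` at `(s₁,s₂,s₃)`, where `W` is the
work function of a nonempty request sequence with last request `r(p)`, then all three points
lie on that last request. -/
theorem minimizer_serves_last_request (lam α : ℝ) (h0 : 0 < lam) (h1 : lam < 1)
    (hα0 : 0 < α) (hα1 : α < (1 - lam) / (2 * (1 + lam)))
    (O : ℝ × ℝ) (l : List (ℝ × ℝ)) (p : ℝ × ℝ) (s1 s2 s3 : ℝ × ℝ)
    (hmin :
      (∀ t1 t2 t3 : ℝ × ℝ,
        Ff lam α (WF O (l ++ [p])) s1 s2 s3 ≤ Ff lam α (WF O (l ++ [p])) t1 t2 t3) ∨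
      (∀ t1 t2 t3 : ℝ × ℝ,
        Gf lam α (WF O (l ++ [p])) s1 s2 s3 ≤ Gf lam α (WF O (l ++ [p])) t1 t2 t3)) :
    s1 ∈ req p ∧ s2 ∈ req p ∧ s3 ∈ req p := by
  have hNN : ∀ s, 0 ≤ WF O (l ++ [p]) s := fun s => WF_nonneg _ O s
  have hLip : ∀ s s', WF O (l ++ [p]) s ≤ WF O (l ++ [p]) s' + dL1 s' s :=
    fun s s' => WF_lip _ O s s'
  have hAnchor : ∀ s, ∃ t ∈ req p, WF O (l ++ [p]) t + dL1 t s ≤ WF O (l ++ [p]) s :=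
    fun s => WF_anchor p l O s
  rcases hmin with hm | hm
  · refine ⟨F_first lam α h0 h1 hα0 hα1 p _ hNN hLip hAnchor s1 s2 s3 hm, ?_,
      F_third lam α h0 h1 hα0 hα1 p _ hNN hLip hAnchor s1 s2 s3 hm⟩
    apply F_first lam α h0 h1 hα0 hα1 p _ hNN hLip hAnchor s2 s1 s3
    intro t1 t2 t3
    rw [Ff_swap lam α _ s2 s1 s3]
    exact hm t1 t2 t3
  · refine ⟨G_first lam α h0 h1 hα0 hα1 p _ hNN hLip hAnchor s1 s2 s3 hm, ?_,
      G_third lam α h0 h1 hα0 hα1 p _ hNN hLip hAnchor s1 s2 s3 hm⟩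
    apply G_first lam α h0 h1 hα0 hα1 p _ hNN hLip hAnchor s2 s1 s3
    intro t1 t2 t3
    rw [Gf_swap lam α _ s2 s1 s3]
    exact hm t1 t2 t3
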